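/- Let m ≥ 2, let A be an m×m binary matrix all of whose row sums a_i = Σ_{j=0}^{m−1} A(i,j) are positive, and let 1 ≤ p < q be integers. Set T = Σ_{j=0}^{m−1} a_j^{p/q}, and define μ₂([i]) = a_i^{p/q}/T for 0 ≤ i ≤ m−1 and μ₂([ij]) = a_i^{p/q − 1} A(i,j) / T for 0 ≤ i, j ≤ m−1. Then μ₂([i]) = Σ_{j=0}^{m−1} μ₂([ij]) for every i, and (1/p − 1/q)·H₁ + (1/q)·H₂ = (1/p)·log_m T, where H₁ = −Σ_{i=0}^{m−1} μ₂([i]) log_m μ₂([i]) and H₂ = −Σ_{i,j=0}^{m−1} μ₂([ij]) log_m μ₂([ij]), with the convention 0·log_m 0 = 0. -/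

import Mathlib

open Filter Topology

/-- Sequences over the alphabet `{0,…,m−1}`; coordinate `n` represents position `n+1`. -/
def ASeq (m : ℕ) : Type := ℕ → Fin m

open Classical in
/-- The distance `d(x,y) = m^{-min{i ≥ 1 : x_i ≠ y_i}}` on `Σ_m^ℕ`
(in the 0-based representation, `min{i ≥ 1 : x_i ≠ y_i} = firstDiff x y + 1`). -/
noncomputable def aseqDist (m : ℕ) (x y : ASeq m) : ℝ :=
  if x = y then 0 else ((m : ℝ)⁻¹) ^ (PiNat.firstDiff x y + 1)

lemma aseqDist_self (m : ℕ) (x : ASeq m) : aseqDist m x x = 0 := by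
  simp [aseqDist]

lemma aseqDist_comm (m : ℕ) (x y : ASeq m) : aseqDist m x y = aseqDist m y x := by
  unfold aseqDist
  by_cases h : x = y
  · simp [h]
  · rw [if_neg h, if_neg (Ne.symm h)]
    exact congrArg (fun n : ℕ => ((m : ℝ)⁻¹) ^ (n + 1)) (PiNat.firstDiff_comm ..)

lemma aseqDist_triangle (m : ℕ) (x y z : ASeq m) :
    aseqDist m x z ≤ aseqDist m x y + aseqDist m y z := by
  classical
  unfold aseqDist
  rcases Nat.eq_zero_or_pos m with hm | hm
  · subst hm; exact (x 0).elim0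
  have hr0 : (0:ℝ) ≤ (m : ℝ)⁻¹ := by positivity
  have hr1 : (m : ℝ)⁻¹ ≤ 1 := by
    rw [inv_le_one_iff₀]; right; exact_mod_cast hm
  by_cases hxz : x = z
  · rw [if_pos hxz]
    have h1 : (0:ℝ) ≤ if x = y then 0 else ((m : ℝ)⁻¹) ^ (PiNat.firstDiff x y + 1) := by
      split <;> positivity
    have h2 : (0:ℝ) ≤ if y = z then 0 else ((m : ℝ)⁻¹) ^ (PiNat.firstDiff y z + 1) := by
      split <;> positivity
    linarith
  · rw [if_neg hxz]
    by_cases hxy : x = y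
    · subst hxy; rw [if_pos rfl, if_neg hxz]; simp
    by_cases hyz : y = z
    · subst hyz; rw [if_pos rfl, if_neg hxz]; simp
    rw [if_neg hxy, if_neg hyz]
    have hmin := PiNat.min_firstDiff_le x y z hxz
    have hpos1 : (0:ℝ) ≤ ((m : ℝ)⁻¹) ^ (PiNat.firstDiff x y + 1) := by positivity
    have hpos2 : (0:ℝ) ≤ ((m : ℝ)⁻¹) ^ (PiNat.firstDiff y z + 1) := by positivity
    rcases le_total (PiNat.firstDiff x y) (PiNat.firstDiff y z) with hcmp | hcmp
    · have : ((m : ℝ)⁻¹) ^ (PiNat.firstDiff x z + 1) ≤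
          ((m : ℝ)⁻¹) ^ (PiNat.firstDiff x y + 1) := by
        apply pow_le_pow_of_le_one hr0 hr1
        simp only [min_eq_left hcmp] at hmin; omega
      linarith
    · have : ((m : ℝ)⁻¹) ^ (PiNat.firstDiff x z + 1) ≤
          ((m : ℝ)⁻¹) ^ (PiNat.firstDiff y z + 1) := by
        apply pow_le_pow_of_le_one hr0 hr1
        simp only [min_eq_right hcmp] at hmin; omega
      linarith

lemma aseqDist_eq_zero (m : ℕ) (x y : ASeq m) (h : aseqDist m x y = 0) : x = y := by
  by_contra hxy
  unfold aseqDist at h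
  rw [if_neg hxy] at h
  rcases Nat.eq_zero_or_pos m with hm | hm
  · subst hm; exact (x 0).elim0
  have : (0:ℝ) < ((m : ℝ)⁻¹) ^ (PiNat.firstDiff x y + 1) := by positivity
  linarith

noncomputable instance ASeq.metricSpace (m : ℕ) : MetricSpace (ASeq m) where
  dist := aseqDist m
  dist_self := aseqDist_self m
  dist_comm := aseqDist_comm m
  dist_triangle := aseqDist_triangle m
  eq_of_dist_eq_zero := aseqDist_eq_zero m _ _

/-- The affine multiplicative subshift `X_A^{(p,q;a,b)}`:
`A(x_{pk+a}, x_{qk+b}) = 1` for all `k ≥ 1` with `pk+a ≥ 1`, `qk+b ≥ 1`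
(position `n ≥ 1` is coordinate `n−1`). -/
def affineSubshift (m : ℕ) (A : Matrix (Fin m) (Fin m) ℕ) (p q : ℕ) (a b : ℤ) :
    Set (ASeq m) :=
  {x | ∀ k : ℕ, 1 ≤ k → 1 ≤ (p : ℤ) * k + a → 1 ≤ (q : ℤ) * k + b →
      A (x (((p : ℤ) * k + a).toNat - 1)) (x (((q : ℤ) * k + b).toNat - 1)) = 1}

/-- The number of patterns of `X` on positions `{1,…,n}`. -/
noncomputable def patternCount (m : ℕ) (X : Set (ASeq m)) (n : ℕ) : ℕ :=
  Set.ncard ((fun (x : ASeq m) (i : Fin n) => x i) '' X)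

/-- `|B|`: the sum of all entries of a matrix. -/
def entrySum {m : ℕ} (B : Matrix (Fin m) (Fin m) ℕ) : ℕ := ∑ i, ∑ j, B i j

/-- The row sums `a_i` of a matrix. -/
def rowSum {m : ℕ} (A : Matrix (Fin m) (Fin m) ℕ) (i : Fin m) : ℕ := ∑ j, A i j

/-- `T = Σ_{j} a_j^{p/q}`. -/
noncomputable def Tsum (m : ℕ) (A : Matrix (Fin m) (Fin m) ℕ) (p q : ℕ) : ℝ :=
  ∑ j, (rowSum A j : ℝ) ^ ((p : ℝ) / (q : ℝ))

/-- `μ₂([i]) = a_i^{p/q} / T`. -/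
noncomputable def muOne (m : ℕ) (A : Matrix (Fin m) (Fin m) ℕ) (p q : ℕ) (i : Fin m) : ℝ :=
  (rowSum A i : ℝ) ^ ((p : ℝ) / (q : ℝ)) / Tsum m A p q

/-- `μ₂([ij]) = a_i^{p/q − 1} A(i,j) / T`. -/
noncomputable def muTwo (m : ℕ) (A : Matrix (Fin m) (Fin m) ℕ) (p q : ℕ) (i j : Fin m) : ℝ :=
  (rowSum A i : ℝ) ^ ((p : ℝ) / (q : ℝ) - 1) * (A i j : ℝ) / Tsum m A p q


/-- The optimizing measure `μ₂` of Proposition 3.2(1): `μ₂([i]) = Σ_j μ₂([ij])` and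
`(1/p − 1/q)·H₁ + (1/q)·H₂ = (1/p)·log_m T` where `H₁, H₂` are the entropies of `μ₂`
on `1`- and `2`-cylinders (with the convention `0·log_m 0 = 0`, as `Real.logb m 0 = 0`). -/
theorem mu_two_entropy
    (m : ℕ) (hm : 2 ≤ m) (A : Matrix (Fin m) (Fin m) ℕ)
    (hbin : ∀ i j, A i j ≤ 1)
    (hrow : ∀ i, 0 < rowSum A i)
    (p q : ℕ) (hp : 1 ≤ p) (hpq : p < q) :
    (∀ i, muOne m A p q i = ∑ j, muTwo m A p q i j) ∧
    (1 / (p : ℝ) - 1 / (q : ℝ)) *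
        (-∑ i, muOne m A p q i * Real.logb m (muOne m A p q i)) +
      (1 / (q : ℝ)) *
        (-∑ i, ∑ j, muTwo m A p q i j * Real.logb m (muTwo m A p q i j)) =
      (1 / (p : ℝ)) * Real.logb m (Tsum m A p q) := by
  have hq : 1 ≤ q := le_of_lt (lt_of_le_of_lt hp hpq)
  have hpR : (0:ℝ) < p := by exact_mod_cast hp
  have hqR : (0:ℝ) < q := by exact_mod_cast hq
  set r : ℝ := (p:ℝ)/(q:ℝ) with hrdef
  have ha : ∀ i, (0:ℝ) < (rowSum A i : ℝ) := fun i => by exact_mod_cast hrow i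
  have hT : 0 < Tsum m A p q := by
    unfold Tsum
    apply Finset.sum_pos
    · intro j _
      exact Real.rpow_pos_of_pos (ha j) _
    · exact ⟨⟨0, by omega⟩, Finset.mem_univ _⟩
  have hTne : Tsum m A p q ≠ 0 := ne_of_gt hT
  -- part 1
  have part1 : ∀ i, muOne m A p q i = ∑ j, muTwo m A p q i j := by
    intro i
    unfold muOne muTwo
    rw [← Finset.sum_div]
    congr 1
    rw [← Finset.mul_sum]
    have hc : (∑ j, ((A i j : ℕ) : ℝ)) = (rowSum A i : ℝ) := by
      unfold rowSum; push_cast; rfl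
    rw [hc]
    rw [show (rowSum A i : ℝ) ^ ((p:ℝ)/(q:ℝ)) = (rowSum A i : ℝ) ^ ((p:ℝ)/(q:ℝ) - 1 + 1) by
      ring_nf, Real.rpow_add (ha i), Real.rpow_one]
  refine ⟨part1, ?_⟩
  -- abbreviations
  set L : ℝ := Real.logb m (Tsum m A p q) with hLdef
  have hlogb_rpow : ∀ (x : ℝ), 0 < x → ∀ y : ℝ,
      Real.logb m (x ^ y) = y * Real.logb m x := by
    intro x hx y
    simp [Real.logb, Real.log_rpow hx, mul_div_assoc]
  -- value of logb of muOne
  have hmu1log : ∀ i, Real.logb m (muOne m A p q i)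
      = r * Real.logb m (rowSum A i : ℝ) - L := by
    intro i
    unfold muOne
    rw [Real.logb_div (ne_of_gt (Real.rpow_pos_of_pos (ha i) _)) hTne,
      hlogb_rpow _ (ha i)]
  -- sum of muOne = 1
  have hsum1 : ∑ i, muOne m A p q i = 1 := by
    unfold muOne
    rw [← Finset.sum_div]
    rw [show (∑ i, (rowSum A i : ℝ) ^ r) = Tsum m A p q from rfl]
    field_simp
  set S : ℝ := ∑ i, muOne m A p q i * Real.logb m (rowSum A i : ℝ) with hSdef
  -- H1
  have hH1 : (∑ i, muOne m A p q i * Real.logb m (muOne m A p q i)) = r * S - L := by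
    calc (∑ i, muOne m A p q i * Real.logb m (muOne m A p q i))
        = ∑ i, (r * (muOne m A p q i * Real.logb m (rowSum A i : ℝ)) - muOne m A p q i * L) := by
          apply Finset.sum_congr rfl
          intro i _
          rw [hmu1log i]; ring
      _ = r * S - (∑ i, muOne m A p q i) * L := by
          rw [Finset.sum_sub_distrib, ← Finset.mul_sum, ← Finset.sum_mul, hSdef]
      _ = r * S - L := by rw [hsum1]; ring
  -- inner sum for H2
  have hH2inner : ∀ i, (∑ j, muTwo m A p q i j * Real.logb m (muTwo m A p q i j))
      = muOne m A p q i * ((r - 1) * Real.logb m (rowSum A i : ℝ) - L) := by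
    intro i
    have hc : ∀ j, muTwo m A p q i j * Real.logb m (muTwo m A p q i j)
        = (A i j : ℝ) * ((rowSum A i : ℝ) ^ (r - 1) / Tsum m A p q *
            ((r - 1) * Real.logb m (rowSum A i : ℝ) - L)) := by
      intro j
      have hb := hbin i j
      interval_cases h : A i j
      · simp [muTwo, h]
      · unfold muTwo
        rw [h]
        push_cast
        rw [mul_one, one_mul,
          Real.logb_div (ne_of_gt (Real.rpow_pos_of_pos (ha i) _)) hTne,
          hlogb_rpow _ (ha i)]
    rw [Finset.sum_congr rfl (fun j _ => hc j), ← Finset.sum_mul]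
    have hc2 : (∑ j, ((A i j : ℕ) : ℝ)) = (rowSum A i : ℝ) := by
      unfold rowSum; push_cast; rfl
    rw [hc2]
    unfold muOne
    have hpow : (rowSum A i : ℝ) * ((rowSum A i : ℝ) ^ (r - 1))
        = (rowSum A i : ℝ) ^ r := by
      nth_rewrite 1 [← Real.rpow_one (rowSum A i : ℝ)]
      rw [← Real.rpow_add (ha i)]
      ring_nf
    field_simp
    rw [← hpow]
    ring
  have hH2 : (∑ i, ∑ j, muTwo m A p q i j * Real.logb m (muTwo m A p q i j))
      = (r - 1) * S - L := by
    calc (∑ i, ∑ j, muTwo m A p q i j * Real.logb m (muTwo m A p q i j))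
        = ∑ i, ((r - 1) * (muOne m A p q i * Real.logb m (rowSum A i : ℝ))
            - muOne m A p q i * L) := by
          apply Finset.sum_congr rfl
          intro i _
          rw [hH2inner i]; ring
      _ = (r - 1) * S - (∑ i, muOne m A p q i) * L := by
          rw [Finset.sum_sub_distrib, ← Finset.mul_sum, ← Finset.sum_mul, hSdef]
      _ = (r - 1) * S - L := by rw [hsum1]; ring
  rw [hH1, hH2, hrdef]
  field_simp
  ring
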